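/- arXiv:2308.08393 — 2 statements merged into one kernel-verified Lean document; each statement's English description precedes it below -/
import Mathlib

section
/- Let X be an m×3 real matrix with homogeneous coordinates X̃ := (X | 𝟏) such that X̃ᵀX̃ is invertible, let L be any m×m real matrix, and let s be a nonzero real number with X̃' := (sX | 𝟏). Then the projected Laplace–Beltrami operators built from L agree: Π(X̃')ᵀ · L · Π(X̃') = Π(X̃)ᵀ · L · Π(X̃); i.e. the PLBO is invariant under global rescaling of the vertex coordinates. -/
open Matrix

/-- The projection matrix `Π(A) := I − A (AᵀA)⁻¹ Aᵀ`. -/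
noncomputable def gramProj {m n : Type*} [Fintype m] [Fintype n] [DecidableEq m]
    [DecidableEq n] (A : Matrix m n ℝ) : Matrix m m ℝ :=
  1 - A * (Aᵀ * A)⁻¹ * Aᵀ

/-- Homogeneous coordinates: append an all-ones column to the coordinate matrix. -/
noncomputable def homog {m : ℕ} (X : Matrix (Fin m) (Fin 3) ℝ) :
    Matrix (Fin m) (Fin 3 ⊕ Fin 1) ℝ :=
  Matrix.fromCols X (Matrix.of fun _ _ => (1 : ℝ))

lemma gramProj_mul_unit {m n : Type*} [Fintype m] [Fintype n] [DecidableEq m]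
    [DecidableEq n] (A : Matrix m n ℝ) (D : Matrix n n ℝ)
    (hD : IsUnit D) : gramProj (A * D) = gramProj A := by
  have hDd := (Matrix.isUnit_iff_isUnit_det D).mp hD
  have hD1 : D * D⁻¹ = 1 := mul_nonsing_inv D hDd
  have hD2 : Dᵀ⁻¹ * Dᵀ = 1 := by
    rw [← transpose_nonsing_inv, ← transpose_mul, hD1, transpose_one]
  unfold gramProj
  congr 1
  rw [transpose_mul, show Dᵀ * Aᵀ * (A * D) = Dᵀ * (Aᵀ * A) * D by
    simp [Matrix.mul_assoc]]
  rw [Matrix.mul_inv_rev, Matrix.mul_inv_rev]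
  calc A * D * (D⁻¹ * ((Aᵀ * A)⁻¹ * Dᵀ⁻¹)) * (Dᵀ * Aᵀ)
      = A * (D * D⁻¹) * (Aᵀ * A)⁻¹ * (Dᵀ⁻¹ * Dᵀ) * Aᵀ := by
        simp only [Matrix.mul_assoc]
    _ = A * (Aᵀ * A)⁻¹ * Aᵀ := by rw [hD1, hD2, Matrix.mul_one, Matrix.mul_one]

lemma homog_smul {m : ℕ} (X : Matrix (Fin m) (Fin 3) ℝ) (s : ℝ) :
    homog (s • X) = homog X *
      Matrix.fromBlocks (s • (1 : Matrix (Fin 3) (Fin 3) ℝ)) 0 0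
        (1 : Matrix (Fin 1) (Fin 1) ℝ) := by
  unfold homog
  rw [Matrix.fromCols_mul_fromBlocks]
  congr 1 <;> simp

theorem stmt6 {m : ℕ} (X : Matrix (Fin m) (Fin 3) ℝ)
    (hX : IsUnit ((homog X)ᵀ * homog X))
    (L : Matrix (Fin m) (Fin m) ℝ) (s : ℝ) (hs : s ≠ 0) :
    (gramProj (homog (s • X)))ᵀ * L * gramProj (homog (s • X)) =
      (gramProj (homog X))ᵀ * L * gramProj (homog X) := by
  have hD : IsUnit (Matrix.fromBlocks (s • (1 : Matrix (Fin 3) (Fin 3) ℝ)) 0 0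
      (1 : Matrix (Fin 1) (Fin 1) ℝ)) := by
    rw [Matrix.isUnit_iff_isUnit_det, Matrix.det_fromBlocks_zero₂₁]
    simp [hs]
  rw [homog_smul, gramProj_mul_unit _ _ hD]
end

section
/- (Lemma 2b, objective-value identity.) Let X ∈ ℝ^{M×3} and Y ∈ ℝ^{N×3} with homogeneous coordinates X̃ := (X|𝟏), Ỹ := (Y|𝟏) having invertible Gram matrices; let ι : Fin n → Fin M and κ : Fin n → Fin N be keypoint index maps with keypoint matrices X_I, Y_J; let L_X ∈ ℝ^{M×M}, L_Y ∈ ℝ^{N×N} be arbitrary, with PLBOs Δ_X := Π(X̃)ᵀL_XΠ(X̃), Δ_Y := Π(Ỹ)ᵀL_YΠ(Ỹ); let h_X, h_Y ∈ ℝⁿ, d_X, d_Y > 0 and λ_def, λ_ori ≥ 0. Let R ∈ ℝ^{3×3} with RᵀR = I, det R = 1, and t ∈ ℝ³, and form the transformed shape X'' := XRᵀ + 𝟏tᵀ with PLBO Δ_X'' := Π(X̃'')ᵀL_XΠ(X̃'') where X̃'' := (X''|𝟏). Then for every n×n matrix P with Pᵀ𝟏ₙ = 𝟏ₙ, every X̂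 ∈ ℝ^{M×3} and every Ŷ ∈ ℝ^{N×3}: E(X'', Y, Δ_X'', Δ_Y, h_X, h_Y, d_X, d_Y; P, X̂, ŶRᵀ + 𝟏tᵀ) = E(X, Y, Δ_X, Δ_Y, h_X, h_Y, d_X, d_Y; P, X̂, Ŷ). -/
open Matrix

/-- The projected Laplace–Beltrami operator built from a stiffness matrix `L`:
`Δ_proj := Π(Z̃)ᵀ L Π(Z̃)`. -/
noncomputable def plbo {m : ℕ} (Z : Matrix (Fin m) (Fin 3) ℝ)
    (L : Matrix (Fin m) (Fin m) ℝ) : Matrix (Fin m) (Fin m) ℝ :=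
  (gramProj (homog Z))ᵀ * L * gramProj (homog Z)

/-- The Frobenius norm of a real matrix. -/
noncomputable def frobNorm {m n : ℕ} (A : Matrix (Fin m) (Fin n) ℝ) : ℝ :=
  Real.sqrt (∑ i, ∑ j, (A i j) ^ 2)

/-- The Euclidean norm of a real vector. -/
noncomputable def vnorm {n : ℕ} (v : Fin n → ℝ) : ℝ :=
  Real.sqrt (∑ i, (v i) ^ 2)

/-- The sparse matching objective `E` of the paper. -/
noncomputable def objE {n M N : ℕ} (lamDef lamOri : ℝ)
    (ι : Fin n → Fin M) (κ : Fin n → Fin N)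
    (X : Matrix (Fin M) (Fin 3) ℝ) (Y : Matrix (Fin N) (Fin 3) ℝ)
    (ΔX : Matrix (Fin M) (Fin M) ℝ) (ΔY : Matrix (Fin N) (Fin N) ℝ)
    (hX hY : Fin n → ℝ) (dX dY : ℝ)
    (P : Matrix (Fin n) (Fin n) ℝ)
    (Xh : Matrix (Fin M) (Fin 3) ℝ) (Yh : Matrix (Fin N) (Fin 3) ℝ) : ℝ :=
  (1 / (n * dY)) * frobNorm (Xh.submatrix ι id - P * Y.submatrix κ id)
    + (1 / (n * dX)) * frobNorm (Yh.submatrix κ id - Pᵀ * X.submatrix ι id)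
    + lamDef * ((1 / (M * dY)) * frobNorm (ΔX * Xh)
        + (1 / (N * dX)) * frobNorm (ΔY * Yh))
    + (lamOri / n) * vnorm (hX - P *ᵥ hY)


section AuxLemmas

open Matrix

/-- Frobenius norm is invariant under right multiplication by a matrix with `B * Bᵀ = 1`. -/
lemma frob_mul_orth {m : ℕ} (A : Matrix (Fin m) (Fin 3) ℝ) (B : Matrix (Fin 3) (Fin 3) ℝ)
    (hB : B * Bᵀ = 1) : frobNorm (A * B) = frobNorm A := by
  have key : (A * B) * (A * B)ᵀ = A * Aᵀ := by
    rw [transpose_mul, ← Matrix.mul_assoc, Matrix.mul_assoc A B Bᵀ, hB, Matrix.mul_one]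
  have h1 : ∀ (C : Matrix (Fin m) (Fin 3) ℝ), ∑ i, ∑ j, (C i j)^2 = ∑ i, (C * Cᵀ) i i := by
    intro C
    refine Finset.sum_congr rfl fun i _ => ?_
    simp [Matrix.mul_apply, pow_two]
  unfold frobNorm
  rw [h1, h1, key]

/-- The Gram projector only depends on the column space. -/
lemma gramProj_mul_right {m : ℕ} {ν : Type*} [Fintype ν] [DecidableEq ν]
    (A : Matrix (Fin m) ν ℝ) (B : Matrix ν ν ℝ)
    (hB : IsUnit B.det) :
    gramProj (A * B) = gramProj A := by
  have hBt : IsUnit Bᵀ.det := by rwa [Matrix.det_transpose]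
  have h1 : (A * B)ᵀ * (A * B) = Bᵀ * ((Aᵀ * A) * B) := by
    simp only [transpose_mul, Matrix.mul_assoc]
  unfold gramProj
  rw [h1, Matrix.mul_inv_rev, Matrix.mul_inv_rev, transpose_mul]
  congr 1
  simp only [Matrix.mul_assoc]
  rw [← Matrix.mul_assoc (Bᵀ)⁻¹ Bᵀ Aᵀ, Matrix.nonsing_inv_mul Bᵀ hBt, Matrix.one_mul,
    ← Matrix.mul_assoc B B⁻¹, Matrix.mul_nonsing_inv B hB, Matrix.one_mul]

/-- The block matrix implementing a rigid motion on homogeneous coordinates. -/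
noncomputable def rigidBlock (R : Matrix (Fin 3) (Fin 3) ℝ) (t : Fin 3 → ℝ) :
    Matrix (Fin 3 ⊕ Fin 1) (Fin 3 ⊕ Fin 1) ℝ :=
  fromBlocks Rᵀ 0 (Matrix.of fun _ j => t j) 1

lemma rigidBlock_det (R : Matrix (Fin 3) (Fin 3) ℝ) (t : Fin 3 → ℝ) (hdet : R.det = 1) :
    (rigidBlock R t).det = 1 := by
  rw [rigidBlock, Matrix.det_fromBlocks_zero₁₂, Matrix.det_transpose, hdet,
    Matrix.det_one, one_mul]

lemma homog_rigid {m : ℕ} (X : Matrix (Fin m) (Fin 3) ℝ) (R : Matrix (Fin 3) (Fin 3) ℝ)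
    (t : Fin 3 → ℝ) :
    homog (X * Rᵀ + vecMulVec (1 : Fin m → ℝ) t) = homog X * rigidBlock R t := by
  ext i j
  cases j with
  | inl j =>
    simp [homog, rigidBlock, Matrix.fromCols, Matrix.mul_apply,
      Fintype.sum_sum_type, Matrix.fromBlocks, vecMulVec_apply]
  | inr j =>
    simp [homog, rigidBlock, Matrix.fromCols, Matrix.mul_apply,
      Fintype.sum_sum_type, Matrix.fromBlocks, Fin.eq_zero j, Matrix.one_apply]

lemma plbo_rigid {m : ℕ} (X : Matrix (Fin m) (Fin 3) ℝ) (L : Matrix (Fin m) (Fin m) ℝ)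
    (R : Matrix (Fin 3) (Fin 3) ℝ) (hdet : R.det = 1) (t : Fin 3 → ℝ) :
    plbo (X * Rᵀ + vecMulVec (1 : Fin m → ℝ) t) L = plbo X L := by
  unfold plbo
  rw [homog_rigid, gramProj_mul_right _ _ (by rw [rigidBlock_det R t hdet]; exact isUnit_one)]

lemma gramProj_mul_self {m : Type*} {ν : Type*} [Fintype m] [Fintype ν] [DecidableEq m]
    [DecidableEq ν] (A : Matrix m ν ℝ) (hA : IsUnit (Aᵀ * A)) :
    gramProj A * A = 0 := by
  have hA' : IsUnit (Aᵀ * A).det := (Matrix.isUnit_iff_isUnit_det _).mp hA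
  unfold gramProj
  rw [Matrix.sub_mul, Matrix.one_mul, Matrix.mul_assoc, Matrix.mul_assoc,
    Matrix.nonsing_inv_mul _ hA', Matrix.mul_one, sub_self]

lemma plbo_mulVec_one {m : ℕ} (Y : Matrix (Fin m) (Fin 3) ℝ) (L : Matrix (Fin m) (Fin m) ℝ)
    (hgY : IsUnit ((homog Y)ᵀ * homog Y)) :
    plbo Y L *ᵥ (1 : Fin m → ℝ) = 0 := by
  have hone : (1 : Fin m → ℝ) = homog Y *ᵥ Sum.elim (0 : Fin 3 → ℝ) (1 : Fin 1 → ℝ) := by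
    ext i
    simp [homog, Matrix.mulVec, dotProduct, Fintype.sum_sum_type, Matrix.fromCols]
  have hproj : gramProj (homog Y) *ᵥ (1 : Fin m → ℝ) = 0 := by
    rw [hone, Matrix.mulVec_mulVec, gramProj_mul_self _ hgY, Matrix.zero_mulVec]
  unfold plbo
  rw [← Matrix.mulVec_mulVec, hproj, Matrix.mulVec_zero]

lemma plbo_mul_vecMulVec {m : ℕ} (Y : Matrix (Fin m) (Fin 3) ℝ) (L : Matrix (Fin m) (Fin m) ℝ)
    (hgY : IsUnit ((homog Y)ᵀ * homog Y)) (t : Fin 3 → ℝ) :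
    plbo Y L * vecMulVec (1 : Fin m → ℝ) t = 0 := by
  have h := plbo_mulVec_one Y L hgY
  ext i j
  have hi : ∑ k, plbo Y L i k = 0 := by
    have h2 := congrFun h i
    simpa [Matrix.mulVec, dotProduct] using h2
  simp [Matrix.mul_apply, vecMulVec_apply, ← Finset.sum_mul, hi]

end AuxLemmas

/-- `P` is a permutation matrix: entries in `{0,1}` and all row and column sums equal `1`. -/
def IsPermMat {n : ℕ} (P : Matrix (Fin n) (Fin n) ℝ) : Prop :=
  (∀ i j, P i j = 0 ∨ P i j = 1) ∧
    P *ᵥ (1 : Fin n → ℝ) = 1 ∧ Pᵀ *ᵥ (1 : Fin n → ℝ) = 1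

theorem stmt13 {n M N : ℕ}
    (X : Matrix (Fin M) (Fin 3) ℝ) (Y : Matrix (Fin N) (Fin 3) ℝ)
    (hgX : IsUnit ((homog X)ᵀ * homog X)) (hgY : IsUnit ((homog Y)ᵀ * homog Y))
    (ι : Fin n → Fin M) (κ : Fin n → Fin N)
    (LX : Matrix (Fin M) (Fin M) ℝ) (LY : Matrix (Fin N) (Fin N) ℝ)
    (hX hY : Fin n → ℝ) (dX dY : ℝ) (hdX : 0 < dX) (hdY : 0 < dY)
    (lamDef lamOri : ℝ) (hld : 0 ≤ lamDef) (hlo : 0 ≤ lamOri)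
    (R : Matrix (Fin 3) (Fin 3) ℝ) (hR : Rᵀ * R = 1) (hdet : R.det = 1)
    (t : Fin 3 → ℝ)
    (P : Matrix (Fin n) (Fin n) ℝ) (hP : Pᵀ *ᵥ (1 : Fin n → ℝ) = 1)
    (Xh : Matrix (Fin M) (Fin 3) ℝ) (Yh : Matrix (Fin N) (Fin 3) ℝ) :
    objE lamDef lamOri ι κ (X * Rᵀ + vecMulVec (1 : Fin M → ℝ) t) Y
        (plbo (X * Rᵀ + vecMulVec (1 : Fin M → ℝ) t) LX) (plbo Y LY)
        hX hY dX dY P Xh (Yh * Rᵀ + vecMulVec (1 : Fin N → ℝ) t) =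
      objE lamDef lamOri ι κ X Y (plbo X LX) (plbo Y LY) hX hY dX dY P Xh Yh := by
  
  have hR' : Rᵀ * (Rᵀ)ᵀ = 1 := by rwa [Matrix.transpose_transpose]
  have hsubX : (X * Rᵀ + vecMulVec (1 : Fin M → ℝ) t).submatrix ι id
      = X.submatrix ι id * Rᵀ + vecMulVec (1 : Fin n → ℝ) t := by
    ext i j
    simp [Matrix.mul_apply, vecMulVec_apply]
  have hsubY : (Yh * Rᵀ + vecMulVec (1 : Fin N → ℝ) t).submatrix κ id
      = Yh.submatrix κ id * Rᵀ + vecMulVec (1 : Fin n → ℝ) t := by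
    ext i j
    simp [Matrix.mul_apply, vecMulVec_apply]
  have hPt : Pᵀ * vecMulVec (1 : Fin n → ℝ) t = vecMulVec (1 : Fin n → ℝ) t := by
    ext i j
    have h1 : ∑ k, P k i = 1 := by
      have h2 := congrFun hP i
      simpa [Matrix.mulVec, dotProduct, Matrix.transpose_apply] using h2
    simp [Matrix.mul_apply, vecMulVec_apply, ← Finset.sum_mul, h1]
  have hterm2 : (Yh * Rᵀ + vecMulVec (1 : Fin N → ℝ) t).submatrix κ id
      - Pᵀ * (X * Rᵀ + vecMulVec (1 : Fin M → ℝ) t).submatrix ι id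
      = (Yh.submatrix κ id - Pᵀ * X.submatrix ι id) * Rᵀ := by
    rw [hsubX, hsubY, Matrix.mul_add, hPt, ← Matrix.mul_assoc, Matrix.sub_mul]
    abel
  have hterm3 : plbo Y LY * (Yh * Rᵀ + vecMulVec (1 : Fin N → ℝ) t)
      = (plbo Y LY * Yh) * Rᵀ := by
    rw [Matrix.mul_add, plbo_mul_vecMulVec Y LY hgY t, add_zero, Matrix.mul_assoc]
  unfold objE
  rw [hterm2, hterm3, frob_mul_orth _ _ hR', frob_mul_orth _ _ hR',
    plbo_rigid X LX R hdet t]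
end
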